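/- Let n ≥ 1. For i ∈ {1,3}, the restriction of V_{2n,∞} to Hᵢ is a free kHᵢ-module of rank n, while the restriction of V_{2n,∞} to H₂ is isomorphic, as a kH₂-module, to the direct sum of two copies of the trivial module k and n−1 copies of the regular module kH₂. -/

import Mathlib

/-- The Klein four-group `G = C₂ × C₂`. -/
abbrev K4 : Type := Multiplicative (ZMod 2 × ZMod 2)

/-- The generator `σ` of the Klein four-group. -/
def sg : K4 := Multiplicative.ofAdd ((1 : ZMod 2), (0 : ZMod 2))

/-- The generator `τ` of the Klein four-group. -/
def tg : K4 := Multiplicative.ofAdd ((0 : ZMod 2), (1 : ZMod 2))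

/-- The subgroup `H₁ = ⟨σ⟩`. -/
def H1 : Subgroup K4 := Subgroup.zpowers sg

/-- The subgroup `H₂ = ⟨τ⟩`. -/
def H2 : Subgroup K4 := Subgroup.zpowers tg

/-- The subgroup `H₃ = ⟨στ⟩`. -/
def H3 : Subgroup K4 := Subgroup.zpowers (sg * tg)

/-- `V` carries the structure of the module `V_{2n,∞}`: the basis vector `B (Sum.inl i)`
is `a_{i+1}` and `B (Sum.inr i)` is `b_{i+1}` (for `0 ≤ i ≤ n-1`), with `X·aᵢ = bᵢ` for
all `i`, `Y·aᵢ = b_{i+1}` for `i ≤ n-1`, `Y·aₙ = 0`, and `X·bⱼ = Y·bⱼ = 0`, i.e.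
(with `σ = 1 + X`, `τ = 1 + Y`) `σ·aᵢ = aᵢ + bᵢ`, `τ·aᵢ = aᵢ + b_{i+1}` (reading
`b_{n+1} = 0`), and `σ, τ` fix the `bⱼ`. -/
def IsVinf (k : Type) [Field k] (n : ℕ) (V : Type) [AddCommGroup V] [Module k V]
    [DistribMulAction K4 V] (B : Module.Basis (Fin n ⊕ Fin n) k V) : Prop :=
  (∀ i : Fin n, sg • B (Sum.inl i) = B (Sum.inl i) + B (Sum.inr i)) ∧
  (∀ i : Fin n, tg • B (Sum.inl i) = B (Sum.inl i) +
      (if h : (i : ℕ) + 1 < n then B (Sum.inr ⟨(i : ℕ) + 1, h⟩) else 0)) ∧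
  (∀ j : Fin n, sg • B (Sum.inr j) = B (Sum.inr j)) ∧
  (∀ j : Fin n, tg • B (Sum.inr j) = B (Sum.inr j))

lemma K4_sq : ∀ g : K4, g * g = 1 := by decide
lemma K4_inv : ∀ g : K4, g⁻¹ = g := by decide

lemma zpowers_cases (g x : K4) (hx : x ∈ Subgroup.zpowers g) : x = 1 ∨ x = g := by
  obtain ⟨m, rfl⟩ := hx
  rcases Int.even_or_odd m with ⟨c, rfl⟩ | ⟨c, rfl⟩
  · left; show g ^ (c + c) = 1; rw [zpow_add]; exact K4_sq _
  · right; show g ^ (2 * c + 1) = g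
    rw [zpow_add, zpow_one, two_mul, zpow_add, K4_sq, one_mul]

section LemA
variable {k : Type} [Field k] [CharP k 2] {W : Type} [AddCommGroup W] [Module k W]
  [DistribMulAction K4 W] [SMulCommClass K4 k W] {m : ℕ}

lemma char2k (a : k) : a + a = 0 := by
  have h2 : (2 : k) = 0 := by
    have := CharP.cast_eq_zero k 2; simpa using this
  rw [← two_mul, h2, zero_mul]

lemma char2W (k : Type) [Field k] [CharP k 2] {W : Type} [AddCommGroup W] [Module k W]
    (w : W) : w + w = 0 := by
  rw [← two_smul k w, show (2:k) = 0 from by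
    have := CharP.cast_eq_zero k 2; simpa using this, zero_smul]

theorem lemA (g : K4) (H : Subgroup K4) (hgH : g ∈ H) (hg1 : g ≠ 1)
    (hcase : ∀ x : ↥H, (x : K4) = 1 ∨ (x : K4) = g)
    (C : Module.Basis (Fin m ⊕ Fin m) k W)
    (hCa : ∀ i, g • C (Sum.inl i) = C (Sum.inl i) + C (Sum.inr i))
    (hCb : ∀ i, g • C (Sum.inr i) = C (Sum.inr i)) :
    ∃ e : W ≃ₗ[k] (Fin m → (↥H → k)),
      ∀ (h : ↥H) (v : W), e ((h : K4) • v) = fun i x => e v i (h⁻¹ * x) := by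
  classical
  set s : ↥H := ⟨g, hgH⟩ with hs
  have hs1 : s ≠ 1 := fun h => hg1 (by simpa [hs] using congrArg Subtype.val h)
  have hinv : s⁻¹ = s := Subtype.ext (by simp [K4_inv])
  have hss : s * s = 1 := Subtype.ext (by simpa using K4_sq g)
  have hxcase : ∀ x : ↥H, x = 1 ∨ x = s := fun x => by
    rcases hcase x with h | h
    · exact Or.inl (Subtype.ext h)
    · exact Or.inr (Subtype.ext h)
  set d1 : ↥H → k := fun x => if x = 1 then 1 else 0 with hd1def
  have d1_one : d1 1 = 1 := if_pos rfl
  have d1_s : d1 s = 0 := if_neg hs1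
  set e0 : W →ₗ[k] (Fin m → ↥H → k) :=
    C.constr k (Sum.elim (fun i => Pi.single i d1) (fun i => Pi.single i (1 : ↥H → k))) with he0
  have e0a : ∀ i, e0 (C (Sum.inl i)) = Pi.single i d1 := fun i => C.constr_basis k _ _
  have e0b : ∀ i, e0 (C (Sum.inr i)) = Pi.single i (1 : ↥H → k) := fun i => C.constr_basis k _ _
  set ev : Fin m → ↥H → ((Fin m → ↥H → k) →ₗ[k] k) := fun i x =>
    (LinearMap.proj (R := k) (φ := fun _ : ↥H => k) x).comp
      (LinearMap.proj (R := k) (φ := fun _ : Fin m => ↥H → k) i) with hev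
  set g0 : (Fin m → ↥H → k) →ₗ[k] W :=
    ∑ i : Fin m, ((ev i 1 + ev i s).smulRight (C (Sum.inl i)) +
      (ev i s).smulRight (C (Sum.inr i))) with hg0
  have g0_apply : ∀ f, g0 f =
      ∑ i : Fin m, ((f i 1 + f i s) • C (Sum.inl i) + f i s • C (Sum.inr i)) := by
    intro f; simp [hg0, hev]
  have g0_single : ∀ (i : Fin m) (w : ↥H → k),
      g0 (Pi.single i w) = (w 1 + w s) • C (Sum.inl i) + w s • C (Sum.inr i) := by
    intro i w
    rw [g0_apply, Finset.sum_eq_single i]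
    · simp
    · intro j _ hj; simp [Pi.single_eq_of_ne hj]
    · intro h; exact absurd (Finset.mem_univ i) h
  have hd1s : ∀ x : ↥H, d1 (s * x) = d1 x + 1 := by
    intro x
    rcases hxcase x with rfl | rfl
    · rw [mul_one, d1_s, d1_one]; exact (char2k 1).symm
    · rw [hss, d1_one, d1_s, zero_add]
  have hleft : g0.comp e0 = LinearMap.id := by
    apply C.ext
    rintro (i | i) <;>
      simp [e0a, e0b, g0_single, d1_one, d1_s, char2k (1 : k)]
  have hright : e0.comp g0 = LinearMap.id := by
    apply LinearMap.ext; intro f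
    rw [LinearMap.comp_apply, LinearMap.id_apply, g0_apply, map_sum]
    have key : ∀ i ∈ Finset.univ, e0 ((f i 1 + f i s) • C (Sum.inl i) + f i s • C (Sum.inr i))
        = (f i 1 + f i s) • (Pi.single i d1 : Fin m → ↥H → k)
          + f i s • (Pi.single i (fun _ => (1:k)) : Fin m → ↥H → k) := by
      intro i _; rw [map_add, map_smul, map_smul, e0a, e0b]; rfl
    rw [Finset.sum_congr rfl key]
    funext i x
    rw [Finset.sum_apply, Finset.sum_apply, Finset.sum_eq_single i]
    · rcases hxcase x with rfl | rfl
      · simp only [Pi.add_apply, Pi.smul_apply, Pi.single_eq_same, smul_eq_mul,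
          d1_one, Pi.one_apply, mul_one]
        linear_combination char2k (f i s)
      · simp [d1_s]
    · intro c _ hc
      simp [Pi.single_apply, Ne.symm hc]
    · intro h; exact absurd (Finset.mem_univ i) h
  set P : (Fin m → ↥H → k) →ₗ[k] (Fin m → ↥H → k) :=
    { toFun := fun f i x => f i (s * x)
      map_add' := fun f f' => rfl
      map_smul' := fun c f => rfl } with hP
  have keyP : e0.comp (DistribSMul.toLinearMap k W g) = P.comp e0 := by
    apply C.ext
    rintro (i | i) <;>
      simp only [LinearMap.comp_apply, DistribSMul.toLinearMap_apply, hCa, hCb,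
        map_add, e0a, e0b, hP, LinearMap.coe_mk, AddHom.coe_mk] <;>
      funext i' x <;>
      simp only [Pi.add_apply, Pi.single_apply, ite_apply, Pi.zero_apply] <;>
      split_ifs with h
    · rw [hd1s x]; rcases hxcase x with rfl | rfl <;> simp [d1_one, d1_s]
    · rw [add_zero]
    · rfl
    · rfl
  refine ⟨LinearEquiv.ofLinear e0 g0 hright hleft, ?_⟩
  intro h v
  simp only [LinearEquiv.ofLinear_apply]
  rcases hxcase h with rfl | rfl
  · rw [show ((1 : ↥H) : K4) = 1 from rfl, one_smul]
    funext i x; rw [inv_one, one_mul]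
  · have := congrFun (congrArg DFunLike.coe keyP) v
    simp only [LinearMap.comp_apply, DistribSMul.toLinearMap_apply, hP,
      LinearMap.coe_mk, AddHom.coe_mk] at this
    rw [hinv]
    exact this

end LemA

set_option maxHeartbeats 2000000 in
/-- Let `n ≥ 1`. For `i ∈ {1,3}`, the restriction of `V_{2n,∞}` to `Hᵢ` is a free
`kHᵢ`-module of rank `n`, while the restriction to `H₂` is isomorphic, as a `kH₂`-module,
to the direct sum of two copies of the trivial module `k` and `n-1` copies of the regular
module `kH₂` (the regular module `kH` is realized as `H → k` with the left regular action
`(h • f)(x) = f(h⁻¹x)`). -/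
theorem stmt11 (k : Type) [Field k] [CharP k 2] (n : ℕ) (hn : 1 ≤ n)
    (V : Type) [AddCommGroup V] [Module k V] [DistribMulAction K4 V] [SMulCommClass K4 k V]
    (B : Module.Basis (Fin n ⊕ Fin n) k V) (hV : IsVinf k n V B) :
    (∀ H ∈ ({H1, H3} : Set (Subgroup K4)),
      ∃ e : V ≃ₗ[k] (Fin n → (↥H → k)),
        ∀ (h : ↥H) (v : V), e ((h : K4) • v) = fun i x => e v i (h⁻¹ * x)) ∧
    (∃ e : V ≃ₗ[k] (k × k × (Fin (n - 1) → (↥H2 → k))),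
      ∀ (h : ↥H2) (v : V),
        e ((h : K4) • v) = ((e v).1, (e v).2.1, fun i x => (e v).2.2 i (h⁻¹ * x))) := by
  classical
  obtain ⟨hVa, hVt, hVb, hVtb⟩ := hV
  set bnext : Fin n → V := fun i =>
    if h : (i : ℕ) + 1 < n then B (Sum.inr ⟨(i : ℕ) + 1, h⟩) else 0 with hbnext
  have hVt' : ∀ i, tg • B (Sum.inl i) = B (Sum.inl i) + bnext i := hVt
  have hbnext_pos : ∀ (i : Fin n) (h : (i : ℕ) + 1 < n),
      bnext i = B (Sum.inr ⟨(i : ℕ) + 1, h⟩) := by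
    intro i h; simp only [hbnext]; rw [dif_pos h]
  have hbnext_neg : ∀ (i : Fin n), ¬ ((i : ℕ) + 1 < n) → bnext i = 0 := by
    intro i h; simp only [hbnext]; rw [dif_neg h]
  have hsbnext : ∀ i, sg • bnext i = bnext i := by
    intro i
    by_cases h : (i : ℕ) + 1 < n
    · rw [hbnext_pos i h]; exact hVb _
    · rw [hbnext_neg i h]; exact smul_zero _
  have htbnext : ∀ i, tg • bnext i = bnext i := by
    intro i
    by_cases h : (i : ℕ) + 1 < n
    · rw [hbnext_pos i h]; exact hVtb _
    · rw [hbnext_neg i h]; exact smul_zero _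
  haveI : FiniteDimensional k V := Module.Finite.of_basis B
  constructor
  · intro H hH
    simp only [Set.mem_insert_iff, Set.mem_singleton_iff] at hH
    rcases hH with rfl | rfl
    · exact lemA sg H1 (Subgroup.mem_zpowers _) (by decide)
        (fun x => zpowers_cases sg x x.2) B hVa hVb
    · -- H3 case: build the new basis D
      set S : Fin n → V := fun i => ∑ j : Fin n, if i ≤ j then B (Sum.inr j) else 0 with hS
      have claim : ∀ i : Fin n,
          S i + (if h : (i : ℕ) + 1 < n then S ⟨(i : ℕ) + 1, h⟩ else 0) = B (Sum.inr i) := by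
        intro i
        by_cases h : (i : ℕ) + 1 < n
        · rw [dif_pos h]
          simp only [hS]
          rw [← Finset.sum_add_distrib]
          have hterm : ∀ j ∈ Finset.univ,
              ((if i ≤ j then B (Sum.inr j) else 0) +
                (if (⟨(i : ℕ) + 1, h⟩ : Fin n) ≤ j then B (Sum.inr j) else 0)) =
              if j = i then B (Sum.inr j) else 0 := by
            intro j _
            rcases lt_trichotomy j i with hj | hj | hj
            · have h1 : ¬ i ≤ j := not_le.2 hj
              have hj' : (j : ℕ) < (i : ℕ) := hj
              have h2 : ¬ (⟨(i : ℕ) + 1, h⟩ : Fin n) ≤ j := by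
                simp only [Fin.le_def]; omega
              rw [if_neg h1, if_neg h2, if_neg hj.ne, add_zero]
            · have hj' : (j : ℕ) = (i : ℕ) := congrArg Fin.val hj
              have h2 : ¬ (⟨(i : ℕ) + 1, h⟩ : Fin n) ≤ j := by
                simp only [Fin.le_def]; omega
              rw [if_pos hj.ge, if_neg h2, if_pos hj, add_zero]
            · have hj' : (i : ℕ) < (j : ℕ) := hj
              have h2 : (⟨(i : ℕ) + 1, h⟩ : Fin n) ≤ j := by
                simp only [Fin.le_def]; omega
              rw [if_pos hj.le, if_pos h2, if_neg hj.ne']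
              exact char2W k _
          rw [Finset.sum_congr rfl hterm]
          simp
        · rw [dif_neg h, add_zero]
          simp only [hS]
          have hterm : ∀ j ∈ Finset.univ,
              (if i ≤ j then B (Sum.inr j) else 0) = if j = i then B (Sum.inr j) else 0 := by
            intro j _
            by_cases hj : j = i
            · subst hj; rw [if_pos le_rfl, if_pos rfl]
            · rw [if_neg ?_, if_neg hj]
              intro hle
              rw [Fin.le_def] at hle
              have hj2 : (j : ℕ) < n := j.isLt
              exact hj (Fin.ext (by omega))
          rw [Finset.sum_congr rfl hterm]
          simp
      set u0 : V →ₗ[k] V := B.constr k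
        (Sum.elim (fun i => B (Sum.inl i)) (fun i => B (Sum.inr i) + bnext i)) with hu0
      set u1 : V →ₗ[k] V := B.constr k (Sum.elim (fun i => B (Sum.inl i)) S) with hu1
      have u0a : ∀ i, u0 (B (Sum.inl i)) = B (Sum.inl i) := fun i => B.constr_basis k _ _
      have u0b : ∀ i, u0 (B (Sum.inr i)) = B (Sum.inr i) + bnext i := fun i =>
        B.constr_basis k _ _
      have u1a : ∀ i, u1 (B (Sum.inl i)) = B (Sum.inl i) := fun i => B.constr_basis k _ _
      have u1b : ∀ i, u1 (B (Sum.inr i)) = S i := fun i => B.constr_basis k _ _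
      have h10 : u1.comp u0 = LinearMap.id := by
        apply B.ext
        rintro (i | i)
        · rw [LinearMap.comp_apply, u0a, u1a, LinearMap.id_apply]
        · rw [LinearMap.comp_apply, u0b, map_add, u1b, LinearMap.id_apply]
          by_cases h : (i : ℕ) + 1 < n
          · rw [hbnext_pos i h, u1b]
            have := claim i; rwa [dif_pos h] at this
          · rw [hbnext_neg i h, map_zero, add_zero]
            have := claim i; rwa [dif_neg h, add_zero] at this
      have hinj : Function.Injective u0 := by
        intro x y hxy
        have hx := LinearMap.congr_fun h10 x
        have hy := LinearMap.congr_fun h10 y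
        simp only [LinearMap.comp_apply, LinearMap.id_apply] at hx hy
        rw [← hx, ← hy, hxy]
      have hbij : Function.Bijective u0 :=
        ⟨hinj, (LinearMap.injective_iff_surjective).1 hinj⟩
      set u : V ≃ₗ[k] V := LinearEquiv.ofBijective u0 hbij with hu
      set D : Module.Basis (Fin n ⊕ Fin n) k V := B.map u with hD
      have hDa : ∀ j, D j = u0 (B j) := fun j => by
        rw [hD, Module.Basis.map_apply]; rfl
      have hDl : ∀ i, D (Sum.inl i) = B (Sum.inl i) := fun i => by rw [hDa, u0a]
      have hDr : ∀ i, D (Sum.inr i) = B (Sum.inr i) + bnext i := fun i => by rw [hDa, u0b]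
      have hCa : ∀ i, (sg * tg) • D (Sum.inl i) = D (Sum.inl i) + D (Sum.inr i) := by
        intro i
        rw [hDl, hDr, mul_smul, hVt', smul_add, hVa, hsbnext]
        abel
      have hCb : ∀ i, (sg * tg) • D (Sum.inr i) = D (Sum.inr i) := by
        intro i
        rw [hDr, mul_smul, smul_add, hVtb, htbnext, smul_add, hVb, hsbnext]
      exact lemA (sg * tg) H3 (Subgroup.mem_zpowers _) (by decide)
        (fun x => zpowers_cases (sg * tg) x x.2) D hCa hCb
  · -- H2 case
    set t : ↥H2 := ⟨tg, Subgroup.mem_zpowers tg⟩ with ht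
    have ht1 : t ≠ 1 := fun h =>
      (by decide : tg ≠ (1 : K4)) (by simpa [ht] using congrArg Subtype.val h)
    have hinv : t⁻¹ = t := Subtype.ext (by simp [K4_inv])
    have htt : t * t = 1 := Subtype.ext (by simpa using K4_sq tg)
    have hxcase : ∀ x : ↥H2, x = 1 ∨ x = t := fun x => by
      rcases zpowers_cases tg x x.2 with h | h
      · exact Or.inl (Subtype.ext h)
      · exact Or.inr (Subtype.ext h)
    set d1 : ↥H2 → k := fun x => if x = 1 then 1 else 0 with hd1def
    have d1_one : d1 1 = 1 := if_pos rfl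
    have d1_t : d1 t = 0 := if_neg ht1
    have hd1t : ∀ x : ↥H2, d1 (t * x) = d1 x + 1 := by
      intro x
      rcases hxcase x with rfl | rfl
      · rw [mul_one, d1_t, d1_one]; exact (char2k 1).symm
      · rw [htt, d1_one, d1_t, zero_add]
    have hn1 : n - 1 < n := by omega
    set la : Fin n := ⟨n - 1, hn1⟩ with hla
    set z0 : Fin n := ⟨0, by omega⟩ with hz0
    set ea : Fin (n - 1) → Fin n := fun i => ⟨(i : ℕ), lt_trans i.isLt hn1⟩ with hea
    set eb : Fin (n - 1) → Fin n := fun i => ⟨(i : ℕ) + 1, Nat.add_lt_of_lt_sub i.isLt⟩ with heb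
    set e0 : V →ₗ[k] (k × k × (Fin (n - 1) → (↥H2 → k))) := B.constr k (Sum.elim
      (fun i : Fin n => if h : (i : ℕ) < n - 1 then
          ((0, 0, Pi.single ⟨(i : ℕ), h⟩ d1) : k × k × (Fin (n - 1) → (↥H2 → k)))
        else (1, 0, 0))
      (fun i : Fin n => if h : 0 < (i : ℕ) then
          ((0, 0, Pi.single ⟨(i : ℕ) - 1, by have := i.isLt; omega⟩ (fun _ => (1 : k)))
            : k × k × (Fin (n - 1) → (↥H2 → k)))
        else (0, 1, 0))) with he0
    have e0a : ∀ i : Fin n, e0 (B (Sum.inl i)) = if h : (i : ℕ) < n - 1 then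
        ((0, 0, Pi.single ⟨(i : ℕ), h⟩ d1) : k × k × (Fin (n - 1) → (↥H2 → k)))
        else (1, 0, 0) := fun i => B.constr_basis k _ _
    have e0b : ∀ i : Fin n, e0 (B (Sum.inr i)) = if h : 0 < (i : ℕ) then
        ((0, 0, Pi.single ⟨(i : ℕ) - 1, by have := i.isLt; omega⟩ (fun _ => (1 : k)))
          : k × k × (Fin (n - 1) → (↥H2 → k)))
        else (0, 1, 0) := fun i => B.constr_basis k _ _
    have e0ea : ∀ i : Fin (n - 1), e0 (B (Sum.inl (ea i))) =
        ((0, 0, Pi.single i d1) : k × k × (Fin (n - 1) → (↥H2 → k))) := by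
      intro i
      rw [e0a, dif_pos (show ((ea i : Fin n) : ℕ) < n - 1 from i.isLt)]
    have e0eb : ∀ i : Fin (n - 1), e0 (B (Sum.inr (eb i))) =
        ((0, 0, Pi.single i (fun _ => (1 : k))) : k × k × (Fin (n - 1) → (↥H2 → k))) := by
      intro i
      rw [e0b, dif_pos (show 0 < ((eb i : Fin n) : ℕ) from Nat.succ_pos _)]
      exact rfl
    have e0la : e0 (B (Sum.inl la)) = (1, 0, 0) := by
      rw [e0a, dif_neg (show ¬ ((la : Fin n) : ℕ) < n - 1 from by rw [hla]; exact lt_irrefl _)]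
    have e0z0 : e0 (B (Sum.inr z0)) = (0, 1, 0) := by
      rw [e0b, dif_neg (show ¬ 0 < ((z0 : Fin n) : ℕ) from by rw [hz0]; exact lt_irrefl _)]
    set pr1 : (k × k × (Fin (n - 1) → (↥H2 → k))) →ₗ[k] k := LinearMap.fst k k _ with hpr1
    set pr2 : (k × k × (Fin (n - 1) → (↥H2 → k))) →ₗ[k] k :=
      (LinearMap.fst k k _).comp (LinearMap.snd k k _) with hpr2
    set ev : Fin (n - 1) → ↥H2 → ((k × k × (Fin (n - 1) → (↥H2 → k))) →ₗ[k] k) := fun i x =>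
      ((LinearMap.proj (R := k) (φ := fun _ : ↥H2 => k) x).comp
        (LinearMap.proj (R := k) (φ := fun _ : Fin (n - 1) => ↥H2 → k) i)).comp
        ((LinearMap.snd k k _).comp (LinearMap.snd k k _)) with hev
    set g0 : (k × k × (Fin (n - 1) → (↥H2 → k))) →ₗ[k] V :=
      pr1.smulRight (B (Sum.inl la)) + pr2.smulRight (B (Sum.inr z0)) +
      ∑ i : Fin (n - 1), ((ev i 1 + ev i t).smulRight (B (Sum.inl (ea i))) +
        (ev i t).smulRight (B (Sum.inr (eb i)))) with hg0
    have g0_apply : ∀ z, g0 z = z.1 • B (Sum.inl la) + z.2.1 • B (Sum.inr z0) +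
        ∑ i : Fin (n - 1), ((z.2.2 i 1 + z.2.2 i t) • B (Sum.inl (ea i)) +
          z.2.2 i t • B (Sum.inr (eb i))) := by
      intro z; simp [hg0, hev, hpr1, hpr2]
    have sum_single : ∀ (j : Fin (n - 1)) (w : ↥H2 → k),
        (∑ i : Fin (n - 1),
          (((Pi.single j w : Fin (n - 1) → ↥H2 → k) i 1
              + (Pi.single j w : Fin (n - 1) → ↥H2 → k) i t)
              • B (Sum.inl (ea i))
            + (Pi.single j w : Fin (n - 1) → ↥H2 → k) i t • B (Sum.inr (eb i))))
        = (w 1 + w t) • B (Sum.inl (ea j)) + w t • B (Sum.inr (eb j)) := by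
      intro j w
      rw [Finset.sum_eq_single j]
      · simp
      · intro c _ hc; simp [Pi.single_eq_of_ne hc]
      · intro hj; exact absurd (Finset.mem_univ j) hj
    have hleft : g0.comp e0 = LinearMap.id := by
      apply B.ext
      rintro (i | i) <;> rw [LinearMap.comp_apply, LinearMap.id_apply]
      · rw [e0a i]
        by_cases h : (i : ℕ) < n - 1
        · rw [dif_pos h, g0_apply]
          simp only [zero_smul, zero_add, add_zero]
          rw [sum_single, d1_one, d1_t, add_zero, zero_smul, add_zero, one_smul]
        · rw [dif_neg h, g0_apply]
          simp only [one_smul, zero_smul, add_zero, zero_add]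
          have : ∀ i' : Fin (n - 1), (((0 : Fin (n-1) → ↥H2 → k) i' 1
              + (0 : Fin (n-1) → ↥H2 → k) i' t) • B (Sum.inl (ea i'))
              + (0 : Fin (n-1) → ↥H2 → k) i' t • B (Sum.inr (eb i'))) = 0 := by
            intro i'; simp
          rw [Finset.sum_congr rfl (fun i' _ => this i'), Finset.sum_const_zero, add_zero]
          congr 1
          refine congrArg Sum.inl (Fin.ext ?_)
          simp only [hla]
          have := i.isLt; omega
      · rw [e0b i]
        by_cases h : 0 < (i : ℕ)
        · rw [dif_pos h, g0_apply]
          simp only [zero_smul, zero_add, add_zero]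
          rw [sum_single]
          rw [char2k (1:k), zero_smul, zero_add, one_smul]
          refine congrArg (fun King => B (Sum.inr King)) (Fin.ext ?_)
          simp only [heb]
          have := i.isLt; omega
        · rw [dif_neg h, g0_apply]
          simp only [one_smul, zero_smul, add_zero, zero_add]
          have : ∀ i' : Fin (n - 1), (((0 : Fin (n-1) → ↥H2 → k) i' 1
              + (0 : Fin (n-1) → ↥H2 → k) i' t) • B (Sum.inl (ea i'))
              + (0 : Fin (n-1) → ↥H2 → k) i' t • B (Sum.inr (eb i'))) = 0 := by
            intro i'; simp
          rw [Finset.sum_congr rfl (fun i' _ => this i'), Finset.sum_const_zero, add_zero]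
          refine congrArg (fun King => B (Sum.inr King)) (Fin.ext ?_)
          simp only [hz0]
          omega
    have hright : e0.comp g0 = LinearMap.id := by
      apply LinearMap.ext; intro z
      rw [LinearMap.comp_apply, LinearMap.id_apply, g0_apply, map_add, map_add,
        map_smul, map_smul, map_sum, e0la, e0z0]
      have key : ∀ i ∈ Finset.univ,
          e0 ((z.2.2 i 1 + z.2.2 i t) • B (Sum.inl (ea i)) + z.2.2 i t • B (Sum.inr (eb i)))
          = (z.2.2 i 1 + z.2.2 i t) • ((0, 0, Pi.single i d1)
              : k × k × (Fin (n - 1) → (↥H2 → k)))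
            + z.2.2 i t • ((0, 0, Pi.single i (fun _ => (1:k)))
              : k × k × (Fin (n - 1) → (↥H2 → k))) := by
        intro i _; rw [map_add, map_smul, map_smul, e0ea, e0eb]
      rw [Finset.sum_congr rfl key]
      obtain ⟨z1, z2, z3⟩ := z
      refine Prod.ext ?_ (Prod.ext ?_ ?_)
      · simp [Prod.fst_sum]
      · simp [Prod.snd_sum, Prod.fst_sum]
      · funext i x
        simp only [Prod.snd_add, Prod.fst_add, Prod.snd_sum, Prod.mk_add_mk, Prod.smul_mk,
          smul_zero, add_zero, zero_add, Pi.add_apply, Finset.sum_apply, Pi.zero_apply]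
        rw [Finset.sum_eq_single i]
        · rcases hxcase x with rfl | rfl
          · simp only [Pi.add_apply, Pi.smul_apply, Pi.single_eq_same, smul_eq_mul,
              Pi.one_apply, Pi.zero_apply, d1_one, mul_one, zero_add]
            linear_combination char2k (z3 i t)
          · simp only [Pi.add_apply, Pi.smul_apply, Pi.single_eq_same, smul_eq_mul,
              Pi.one_apply, Pi.zero_apply, d1_t, mul_zero, mul_one, zero_add]
        · intro c _ hc
          simp [Pi.single_apply, Ne.symm hc]
        · intro hi; exact absurd (Finset.mem_univ i) hi
    set Q : (k × k × (Fin (n - 1) → (↥H2 → k))) →ₗ[k] (k × k × (Fin (n - 1) → (↥H2 → k))) :=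
      { toFun := fun z => (z.1, z.2.1, fun i x => z.2.2 i (t * x))
        map_add' := fun z w => rfl
        map_smul' := fun c z => rfl } with hQ
    have Qapp : ∀ z : k × k × (Fin (n - 1) → (↥H2 → k)),
        Q z = (z.1, z.2.1, fun i x => z.2.2 i (t * x)) := fun z => rfl
    have keyQ : e0.comp (DistribSMul.toLinearMap k V tg) = Q.comp e0 := by
      apply B.ext
      rintro (i | i) <;>
        rw [LinearMap.comp_apply, LinearMap.comp_apply, DistribSMul.toLinearMap_apply]
      · rw [hVt' i, map_add, e0a i]
        by_cases h : (i : ℕ) < n - 1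
        · have h' : (i : ℕ) + 1 < n := by omega
          rw [dif_pos h, hbnext_pos i h', e0b, dif_pos (show 0 < ((i:ℕ)+1) from Nat.succ_pos _)]
          rw [Qapp]
          refine Prod.ext (by simp) (Prod.ext (by simp) ?_)
          show ((Pi.single ⟨(i:ℕ), h⟩ d1 : Fin (n-1) → ↥H2 → k)
              + (Pi.single ⟨(i:ℕ)+1-1, _⟩ (fun _ => (1:k)) : Fin (n-1) → ↥H2 → k))
            = fun i' x => (Pi.single ⟨(i:ℕ), h⟩ d1 : Fin (n-1) → ↥H2 → k) i' (t * x)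
          have hidx : (⟨(i:ℕ)+1-1, by omega⟩ : Fin (n-1)) = ⟨(i:ℕ), h⟩ := Fin.ext (by simp)
          rw [hidx]
          funext i' x
          simp only [Pi.add_apply, Pi.single_apply, ite_apply, Pi.zero_apply]
          split_ifs with hcnd
          · rw [hd1t x]
          · rw [add_zero]
        · have h' : ¬ ((i : ℕ) + 1 < n) := by omega
          rw [dif_neg h, hbnext_neg i h', map_zero, add_zero, Qapp]
          exact Prod.ext rfl (Prod.ext rfl (funext fun i' => funext fun x => rfl))
      · rw [hVtb i, e0b i]
        by_cases h : 0 < (i : ℕ)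
        · rw [dif_pos h, Qapp]
          refine Prod.ext rfl (Prod.ext rfl ?_)
          funext i' x
          simp only [Pi.single_apply, ite_apply, Pi.zero_apply]
        · rw [dif_neg h, Qapp]
          exact Prod.ext rfl (Prod.ext rfl (funext fun i' => funext fun x => rfl))
    refine ⟨LinearEquiv.ofLinear e0 g0 hright hleft, ?_⟩
    intro h v
    simp only [LinearEquiv.ofLinear_apply]
    rcases hxcase h with rfl | rfl
    · rw [show ((1 : ↥H2) : K4) = 1 from rfl, one_smul]
      rw [inv_one]
      show e0 v = ((e0 v).1, (e0 v).2.1, fun i x => (e0 v).2.2 i (1 * x))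
      simp only [one_mul]
    · have := congrFun (congrArg DFunLike.coe keyQ) v
      simp only [LinearMap.comp_apply, DistribSMul.toLinearMap_apply] at this
      rw [Qapp] at this
      rw [hinv]
      exact this
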